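/- For all real w > 1 and all s ≥ 0, ∑_{n=0}^∞ (1/(n+w)²) e^{-s/(n+w)} = ∫_0^∞ (J₁(2√(st))/√(st)) e^{-(w-1)t} · (t/(e^t−1)) dt, where J₁ is the Bessel function of the first kind of order one with J₁(2√u)/√u = ∑_{k=0}^∞ (−u)^k/(k!(k+1)!). -/

import Mathlib

open Real MeasureTheory
open Set

/-- The entire function J₁(2√v)/√v = ∑_{k≥0} (−v)^k/(k!(k+1)!). -/
noncomputable def besselJ1Ratio (v : ℝ) : ℝ :=
  ∑' k : ℕ, (-v) ^ k / ((Nat.factorial k : ℝ) * (Nat.factorial (k + 1)))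

lemma exp_tsum (x : ℝ) : ∑' k : ℕ, x ^ k / (Nat.factorial k : ℝ) = Real.exp x := by
  rw [Real.exp_eq_exp_ℝ, NormedSpace.exp_eq_tsum_div]

lemma aux_integrable (k : ℕ) {r : ℝ} (hr : 0 < r) :
    IntegrableOn (fun t : ℝ => t ^ (k+1) * Real.exp (-(r * t))) (Ioi 0) := by
  have h := integrableOn_rpow_mul_exp_neg_mul_rpow (s := ((k+1:ℕ):ℝ)) (p := 1)
    (by push_cast; linarith [Nat.cast_nonneg (α:=ℝ) k]) one_pos hr
  refine h.congr_fun (fun t ht => ?_) measurableSet_Ioi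
  dsimp only
  rw [Real.rpow_one, Real.rpow_natCast, neg_mul]

lemma aux_integral (k : ℕ) {r : ℝ} (hr : 0 < r) :
    ∫ t in Ioi (0:ℝ), t ^ (k+1) * Real.exp (-(r * t))
      = (Nat.factorial (k+1) : ℝ) / r ^ (k+2) := by
  have h := Real.integral_rpow_mul_exp_neg_mul_Ioi (a := ((k+2:ℕ):ℝ)) (by positivity) hr
  rw [show ((k+2:ℕ):ℝ) - 1 = ((k+1:ℕ):ℝ) by push_cast; ring] at h
  simp_rw [Real.rpow_natCast] at h
  rw [h, show ((k+2:ℕ):ℝ) = ((k+1:ℕ):ℝ) + 1 by push_cast; ring,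
    Real.Gamma_nat_eq_factorial, div_pow, one_pow]
  field_simp

lemma pointwise_eq (w s : ℝ) (hw : 1 < w) (hs : 0 ≤ s) {t : ℝ} (ht : t ∈ Ioi (0:ℝ)) :
    besselJ1Ratio (s * t) * Real.exp (-(w - 1) * t) * (t / (Real.exp t - 1))
      = ∑' p : ℕ × ℕ, ((-s)^p.2 / ((p.2.factorial : ℝ) * ((p.2+1).factorial))) *
          (t ^ (p.2+1) * Real.exp (-(((p.1:ℝ) + w) * t))) := by
  rw [mem_Ioi] at ht
  have hfact : ∀ k:ℕ, (0:ℝ) < (k.factorial : ℝ) * ((k+1).factorial) := fun k => by positivity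
  set a : ℕ → ℝ := fun k => (-(s*t))^k / ((k.factorial : ℝ) * ((k+1).factorial)) with ha_def
  set b : ℕ → ℝ := fun n => Real.exp (-(w-1) * t) * (t * Real.exp (-(((n:ℝ)+1) * t))) with hb_def
  have ha_norm : Summable fun k => ‖a k‖ := by
    refine Summable.of_nonneg_of_le (fun k => norm_nonneg _) (fun k => ?_)
      (Real.summable_pow_div_factorial (s*t))
    have h1 : ‖a k‖ = (s*t)^k / ((k.factorial : ℝ) * ((k+1).factorial)) := by
      rw [ha_def]
      rw [norm_div, norm_pow, norm_neg, Real.norm_of_nonneg (mul_nonneg hs ht.le),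
        Real.norm_of_nonneg (hfact k).le]
    rw [h1]
    have hle : (k.factorial:ℝ) ≤ (k.factorial:ℝ) * ((k+1).factorial) :=
      le_mul_of_one_le_right (by positivity) (by exact_mod_cast (Nat.factorial_pos (k+1)))
    gcongr
  have hr0 : (0:ℝ) < Real.exp (-t) := Real.exp_pos _
  have hr1 : Real.exp (-t) < 1 := by
    rw [Real.exp_lt_one_iff]; linarith
  have hbn : ∀ n:ℕ, b n = (Real.exp (-(w-1) * t) * t) * Real.exp (-t)^(n+1) := by
    intro n
    simp only [hb_def]
    rw [show (-(((n:ℝ)+1) * t)) = ((n+1:ℕ):ℝ) * (-t) by push_cast; ring, Real.exp_nat_mul]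
    ring
  have hgeom : Summable fun n : ℕ => Real.exp (-t)^(n+1) := by
    have := (summable_geometric_of_lt_one hr0.le hr1).mul_right (Real.exp (-t))
    simpa [pow_succ] using this
  have hb_summ : Summable b := (hgeom.mul_left _).congr fun n => (hbn n).symm
  have hb_nonneg : ∀ n, 0 ≤ b n := fun n => by rw [hb_def]; positivity
  have hb_norm : Summable fun n => ‖b n‖ :=
    hb_summ.congr fun n => (Real.norm_of_nonneg (hb_nonneg n)).symm
  have h2 : (1:ℝ) < Real.exp t := by
    rw [← Real.exp_zero]; exact Real.exp_lt_exp.2 ht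
  have hb_tsum : ∑' n, b n = Real.exp (-(w-1) * t) * (t / (Real.exp t - 1)) := by
    rw [tsum_congr hbn, tsum_mul_left]
    have : ∑' n:ℕ, Real.exp (-t)^(n+1) = Real.exp (-t) * (1 - Real.exp (-t))⁻¹ := by
      rw [tsum_congr (fun n => pow_succ' (Real.exp (-t)) n), tsum_mul_left,
        tsum_geometric_of_lt_one hr0.le hr1]
    rw [this]
    have h1 : Real.exp (-t) * Real.exp t = 1 := by rw [← Real.exp_add]; simp
    have h6 : (1:ℝ) - Real.exp (-t) = Real.exp (-t) * (Real.exp t - 1) := by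
      rw [mul_sub, h1]; ring
    have h5 : Real.exp (-t) * (1 - Real.exp (-t))⁻¹ = (Real.exp t - 1)⁻¹ := by
      rw [h6, mul_inv, ← mul_assoc, mul_inv_cancel₀ hr0.ne', one_mul]
    rw [h5, div_eq_mul_inv]
    ring
  have key := tsum_mul_tsum_of_summable_norm ha_norm hb_norm
  have hB : besselJ1Ratio (s * t) = ∑' k, a k := rfl
  calc besselJ1Ratio (s * t) * Real.exp (-(w - 1) * t) * (t / (Real.exp t - 1))
      = (∑' k, a k) * (∑' n, b n) := by rw [hB, hb_tsum]; ring
    _ = ∑' z : ℕ × ℕ, a z.1 * b z.2 := key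
    _ = ∑' p : ℕ × ℕ, ((-s)^p.2 / ((p.2.factorial : ℝ) * ((p.2+1).factorial))) *
          (t ^ (p.2+1) * Real.exp (-(((p.1:ℝ) + w) * t))) := by
        rw [← (Equiv.prodComm ℕ ℕ).tsum_eq (fun p : ℕ × ℕ =>
          ((-s)^p.2 / ((p.2.factorial : ℝ) * ((p.2+1).factorial))) *
          (t ^ (p.2+1) * Real.exp (-(((p.1:ℝ) + w) * t))))]
        refine tsum_congr fun z => ?_
        simp only [Equiv.prodComm_apply, Prod.swap, ha_def, hb_def]
        have hexp : Real.exp (-(w-1) * t) * Real.exp (-(((z.2:ℝ)+1) * t))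
            = Real.exp (-(((z.2:ℝ) + w) * t)) := by
          rw [← Real.exp_add]; congr 1; ring
        rw [show (-(s*t)) = (-s)*t by ring, mul_pow, ← hexp, pow_succ]
        ring

set_option maxHeartbeats 1000000 in
theorem stmt12 (w s : ℝ) (hw : 1 < w) (hs : 0 ≤ s) :
    ∑' n : ℕ, (1 / (n + w) ^ 2) * Real.exp (-s / (n + w))
      = ∫ t in Set.Ioi (0:ℝ),
          besselJ1Ratio (s * t) * Real.exp (-(w - 1) * t) * (t / (Real.exp t - 1)) := by
  have hw0 : (0:ℝ) < w := by linarith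
  have hA : ∀ n : ℕ, (0:ℝ) < (n:ℝ) + w := fun n => by positivity
  set g : ℕ × ℕ → ℝ → ℝ := fun p t =>
    ((-s)^p.2 / ((p.2.factorial : ℝ) * ((p.2+1).factorial))) *
      (t ^ (p.2+1) * Real.exp (-(((p.1:ℝ) + w) * t))) with hg
  have hfact : ∀ k:ℕ, (0:ℝ) < (k.factorial : ℝ) * ((k+1).factorial) := fun k => by positivity
  have hint : ∀ p : ℕ × ℕ, IntegrableOn (g p) (Ioi 0) := fun p =>
    (aux_integrable p.2 (hA p.1)).const_mul _
  -- value of the integrals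
  have hIval : ∀ p : ℕ × ℕ, (∫ t in Ioi (0:ℝ), g p t)
      = ((-s)/((p.1:ℝ)+w))^p.2 / (p.2.factorial : ℝ) * (1/((p.1:ℝ)+w)^2) := by
    intro p
    simp only [hg]
    rw [integral_const_mul, aux_integral p.2 (hA p.1), div_pow]
    have h1 : ((p.2.factorial:ℝ)) ≠ 0 := by positivity
    have h2 : (((p.2+1).factorial:ℝ)) ≠ 0 := by positivity
    have h3 : ((p.1:ℝ)+w) ≠ 0 := (hA p.1).ne'
    field_simp
    ring
  -- value of the norm integrals
  have hnorm : ∀ p : ℕ × ℕ, (∫ t in Ioi (0:ℝ), ‖g p t‖)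
      = (s/((p.1:ℝ)+w))^p.2 / (p.2.factorial : ℝ) * (1/((p.1:ℝ)+w)^2) := by
    intro p
    have heq : ∀ t ∈ Ioi (0:ℝ), ‖g p t‖
        = (s^p.2 / ((p.2.factorial : ℝ) * ((p.2+1).factorial))) *
          (t ^ (p.2+1) * Real.exp (-(((p.1:ℝ)+w) * t))) := by
      intro t ht
      rw [mem_Ioi] at ht
      simp only [hg]
      rw [norm_mul, norm_div, norm_pow, norm_neg,
        Real.norm_of_nonneg hs, Real.norm_of_nonneg (hfact p.2).le,
        Real.norm_of_nonneg (by positivity : (0:ℝ) ≤ t ^ (p.2+1) * Real.exp (-(((p.1:ℝ)+w) * t)))]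
    rw [setIntegral_congr_fun measurableSet_Ioi heq, integral_const_mul,
      aux_integral p.2 (hA p.1), div_pow]
    have h1 : ((p.2.factorial:ℝ)) ≠ 0 := by positivity
    have h2 : (((p.2+1).factorial:ℝ)) ≠ 0 := by positivity
    have h3 : ((p.1:ℝ)+w) ≠ 0 := (hA p.1).ne'
    field_simp
    ring
  -- summability of the norm integrals
  have hc_nonneg : ∀ p : ℕ × ℕ,
      0 ≤ (s/((p.1:ℝ)+w))^p.2 / (p.2.factorial:ℝ) * (1/((p.1:ℝ)+w)^2) := fun p =>
    mul_nonneg (div_nonneg (pow_nonneg (div_nonneg hs (hA p.1).le) _) (Nat.cast_nonneg _))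
      (by positivity)
  have hc_fiber : ∀ n : ℕ, Summable fun k : ℕ =>
      (s/((n:ℝ)+w))^k / (k.factorial:ℝ) * (1/((n:ℝ)+w)^2) :=
    fun n => (Real.summable_pow_div_factorial _).mul_right _
  have hc_fiber_tsum : ∀ n : ℕ, (∑' k : ℕ, (s/((n:ℝ)+w))^k / (k.factorial:ℝ) * (1/((n:ℝ)+w)^2))
      = Real.exp (s/((n:ℝ)+w)) * (1/((n:ℝ)+w)^2) := fun n => by
    rw [tsum_mul_right, exp_tsum]
  have hps : Summable fun n : ℕ => 1/((n:ℝ)+1)^2 := by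
    have h0 : Summable fun n : ℕ => 1/((n:ℝ))^2 := summable_one_div_nat_pow.2 one_lt_two
    have := (summable_nat_add_iff 1).2 h0
    refine this.congr fun n => ?_
    push_cast
    ring
  have hbig : Summable fun n : ℕ => Real.exp (s/w) * (1/((n:ℝ)+1)^2) := hps.mul_left _
  have hc : Summable (fun p : ℕ × ℕ =>
      (s/((p.1:ℝ)+w))^p.2 / (p.2.factorial:ℝ) * (1/((p.1:ℝ)+w)^2)) := by
    refine (summable_prod_of_nonneg hc_nonneg).2 ⟨hc_fiber, ?_⟩
    refine Summable.of_nonneg_of_le (fun n => tsum_nonneg fun k => hc_nonneg (n,k))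
      (fun n => ?_) hbig
    rw [hc_fiber_tsum n]
    have h1 : s/((n:ℝ)+w) ≤ s/w := by
      gcongr <;> linarith [Nat.cast_nonneg (α:=ℝ) n]
    have h2 : (1:ℝ)/((n:ℝ)+w)^2 ≤ 1/((n:ℝ)+1)^2 := by
      gcongr <;> linarith [Nat.cast_nonneg (α:=ℝ) n]
    exact mul_le_mul (Real.exp_le_exp.2 h1) h2 (by positivity) (Real.exp_pos _).le
  -- measurability
  have hmeas : ∀ p : ℕ × ℕ, AEStronglyMeasurable (g p) (volume.restrict (Ioi 0)) := by
    intro p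
    apply Continuous.aestronglyMeasurable
    simp only [hg]
    fun_prop
  -- lintegral condition
  have hlint : ∑' p : ℕ×ℕ, ∫⁻ t in Ioi (0:ℝ), ‖g p t‖₊ ≠ ⊤ := by
    have h1 : ∀ p : ℕ×ℕ, (∫⁻ t in Ioi (0:ℝ), ‖g p t‖₊)
        = ENNReal.ofReal ((s/((p.1:ℝ)+w))^p.2 / (p.2.factorial:ℝ) * (1/((p.1:ℝ)+w)^2)) := by
      intro p
      simp only [← enorm_eq_nnnorm]
      rw [← ofReal_integral_norm_eq_lintegral_enorm (hint p), hnorm p]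
    rw [tsum_congr h1, ← ENNReal.ofReal_tsum_of_nonneg hc_nonneg hc]
    exact ENNReal.ofReal_ne_top
  -- summability of the integral values
  have hd_fiber : ∀ n : ℕ, Summable fun k : ℕ =>
      ((-s)/((n:ℝ)+w))^k / (k.factorial : ℝ) * (1/((n:ℝ)+w)^2) :=
    fun n => (Real.summable_pow_div_factorial _).mul_right _
  have hd : Summable (fun p : ℕ×ℕ =>
      ((-s)/((p.1:ℝ)+w))^p.2 / (p.2.factorial:ℝ) * (1/((p.1:ℝ)+w)^2)) := by
    apply Summable.of_norm
    refine hc.congr fun p => ?_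
    rw [norm_mul, norm_div, norm_pow, norm_div, norm_neg,
      Real.norm_of_nonneg hs, Real.norm_of_nonneg (hA p.1).le,
      Real.norm_of_nonneg (Nat.cast_nonneg _ : (0:ℝ) ≤ (p.2.factorial:ℝ)),
      Real.norm_of_nonneg (by positivity : (0:ℝ) ≤ 1/((p.1:ℝ)+w)^2)]
  -- main chain
  calc ∑' n : ℕ, (1 / (n + w) ^ 2) * Real.exp (-s / (n + w))
      = ∑' n : ℕ, ∑' k : ℕ,
          ((-s)/((n:ℝ)+w))^k / (k.factorial : ℝ) * (1/((n:ℝ)+w)^2) := by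
        refine tsum_congr fun n => ?_
        rw [tsum_mul_right, exp_tsum, neg_div]
        ring
    _ = ∑' p : ℕ × ℕ,
          ((-s)/((p.1:ℝ)+w))^p.2 / (p.2.factorial : ℝ) * (1/((p.1:ℝ)+w)^2) :=
        (Summable.tsum_prod' hd hd_fiber).symm
    _ = ∑' p : ℕ × ℕ, ∫ t in Ioi (0:ℝ), g p t := tsum_congr fun p => (hIval p).symm
    _ = ∫ t in Ioi (0:ℝ), ∑' p : ℕ × ℕ, g p t := (integral_tsum hmeas hlint).symm
    _ = ∫ t in Set.Ioi (0:ℝ),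
          besselJ1Ratio (s * t) * Real.exp (-(w - 1) * t) * (t / (Real.exp t - 1)) := by
        refine setIntegral_congr_fun measurableSet_Ioi fun t ht => ?_
        exact (pointwise_eq w s hw hs ht).symm
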